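/- Let G be a connected graph on n ≥ 3 vertices with T(G) = ⌈n/2⌉. Then there exist adjacent vertices u, v ∈ V(G) such that G' = G - {u,v} is connected and T(G') = ⌈(n-2)/2⌉. -/

import Mathlib

open SimpleGraph

/-- A tree cover of `G`: vertex-disjoint induced subtrees covering all vertices. -/
def IsTreeCover {V : Type} (G : SimpleGraph V) (C : Finset (Set V)) : Prop :=
  (∀ s ∈ C, (G.induce s).IsTree) ∧ (∀ v : V, ∃ s ∈ C, v ∈ s) ∧
    (C : Set (Set V)).PairwiseDisjoint id

/-- The tree cover number: minimum cardinality of a tree cover. -/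
noncomputable def treeCoverNumber {V : Type} (G : SimpleGraph V) : ℕ :=
  sInf {n | ∃ C : Finset (Set V), IsTreeCover G C ∧ C.card = n}

section All


section TreeLemmas
variable {V : Type} {G : SimpleGraph V}

private lemma no_cycle_double {c₁ c₂ : V}
    (hcom : c₁ ≠ c₂ → ∀ w, G.Adj w c₁ → G.Adj w c₂ → False)
    (hedge : ∀ a b, G.Adj a b → a = c₁ ∨ b = c₁ ∨ a = c₂ ∨ b = c₂)
    (p : G.Walk c₁ c₁) (hp : p.IsCycle) : False := by
  have hlen := hp.three_le_length
  cases p with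
  | nil => exact hp.ne_nil rfl
  | @cons _ x _ h₁ q₁ =>
    cases q₁ with
    | nil => simp at hlen
    | @cons _ y _ h₂ q₂ =>
      cases q₂ with
      | nil => simp at hlen
      | @cons _ z _ h₃ q₃ =>
        have hnd0 := hp.support_nodup
        rw [Walk.support_cons, List.tail_cons, Walk.support_cons,
          Walk.support_cons] at hnd0
        -- hnd0 : (x :: y :: q₃.support).Nodup
        have hxq : x ∉ y :: q₃.support := (List.nodup_cons.mp hnd0).1
        have hyq : y ∉ q₃.support := (List.nodup_cons.mp (List.nodup_cons.mp hnd0).2).1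
        have hq : q₃.support.Nodup := (List.nodup_cons.mp (List.nodup_cons.mp hnd0).2).2
        have hc₁ : c₁ ∈ q₃.support := q₃.end_mem_support
        have hzq : z ∈ q₃.support := q₃.start_mem_support
        have hxc₁ : x ≠ c₁ := fun hh => hxq (by rw [hh]; exact List.mem_cons_of_mem _ hc₁)
        have hxz : x ≠ z := fun hh => hxq (by rw [hh]; exact List.mem_cons_of_mem _ hzq)
        have hyc₁ : y ≠ c₁ := fun hh => hyq (hh ▸ hc₁)
        have hxy : x ≠ y := fun hh => hxq (by rw [hh]; exact List.mem_cons_self)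
        rcases hedge x y h₂ with h | h | h | h
        · exact hxc₁ h
        · exact hyc₁ h
        · -- x = c₂
          rcases hedge y z h₃ with h' | h' | h' | h'
          · exact hyc₁ h'
          · -- z = c₁
            cases q₃ with
            | nil =>
              -- triangle c₁ x y ; h₃ : Adj y c₁
              refine hcom (fun hh => hxc₁ (h.trans hh.symm)) y h₃ ?_
              rw [← h]; exact h₂.symm
            | @cons _ w _ h₄ q₄ =>
              rw [Walk.support_cons] at hq
              exact (List.nodup_cons.mp hq).1 (by rw [h']; exact q₄.end_mem_support)
          · exact hxy (h.trans h'.symm)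
          · exact hxz (h.trans h'.symm)
        · -- y = c₂
          exact hcom (fun hh => hyc₁ (h.trans hh.symm)) x h₁.symm (h ▸ h₂)

lemma isAcyclic_double {c₁ c₂ : V}
    (hcom : c₁ ≠ c₂ → ∀ w, G.Adj w c₁ → G.Adj w c₂ → False)
    (hedge : ∀ a b, G.Adj a b → a = c₁ ∨ b = c₁ ∨ a = c₂ ∨ b = c₂) : G.IsAcyclic := by
  classical
  intro v p hp
  by_cases h1 : c₁ ∈ p.support
  · exact no_cycle_double hcom hedge (p.rotate _ h1) (hp.rotate h1)
  · by_cases h2 : c₂ ∈ p.support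
    · refine no_cycle_double (c₁ := c₂) (c₂ := c₁)
        (fun hh w hw1 hw2 => hcom hh.symm w hw2 hw1)
        (fun a b hab => by rcases hedge a b hab with h | h | h | h <;> tauto)
        (p.rotate _ h2) (hp.rotate h2)
    · cases p with
      | nil => exact hp.ne_nil rfl
      | @cons _ x _ h₁ q₁ =>
        rcases hedge _ _ h₁ with h | h | h | h
        · exact h1 (by rw [← h]; exact Walk.start_mem_support _)
        · exact h1 (by rw [Walk.support_cons, ← h]
                       exact List.mem_cons_of_mem _ q₁.start_mem_support)
        · exact h2 (by rw [← h]; exact Walk.start_mem_support _)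
        · exact h2 (by rw [Walk.support_cons, ← h]
                       exact List.mem_cons_of_mem _ q₁.start_mem_support)

end TreeLemmas



section TreeLemmas2
variable {V : Type} {G : SimpleGraph V}

lemma connected_induce_double {S : Set V} {c₁ c₂ : V} (h₁ : c₁ ∈ S) (h₂ : c₂ ∈ S)
    (hcc : c₁ = c₂ ∨ G.Adj c₁ c₂)
    (hadj : ∀ a ∈ S, a = c₁ ∨ a = c₂ ∨ G.Adj c₁ a ∨ G.Adj c₂ a) :
    (G.induce S).Connected := by
  rw [connected_iff]
  refine ⟨?_, ⟨⟨c₁, h₁⟩⟩⟩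
  have hc2 : (G.induce S).Reachable ⟨c₂, h₂⟩ ⟨c₁, h₁⟩ := by
    rcases hcc with h | h
    · have he : (⟨c₂, h₂⟩ : S) = ⟨c₁, h₁⟩ := Subtype.ext h.symm
      rw [he]
    · exact (Adj.reachable (by exact h.symm : (G.induce S).Adj ⟨c₂, h₂⟩ ⟨c₁, h₁⟩))
  have key : ∀ a : S, (G.induce S).Reachable a ⟨c₁, h₁⟩ := by
    rintro ⟨a, ha⟩
    rcases hadj a ha with h | h | h | h
    · have he : (⟨a, ha⟩ : S) = ⟨c₁, h₁⟩ := Subtype.ext h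
      rw [he]
    · have he : (⟨a, ha⟩ : S) = ⟨c₂, h₂⟩ := Subtype.ext h
      rw [he]; exact hc2
    · exact Adj.reachable (by exact h.symm : (G.induce S).Adj ⟨a, ha⟩ ⟨c₁, h₁⟩)
    · exact (Adj.reachable (by exact h.symm : (G.induce S).Adj ⟨a, ha⟩ ⟨c₂, h₂⟩)).trans hc2
  intro a b
  exact (key a).trans (key b).symm

end TreeLemmas2



universe u
variable {V : Type} {G : SimpleGraph V}

/-- transfer IsTree across iso -/
lemma isTree_of_iso {α β : Type} {A : SimpleGraph α} {B : SimpleGraph β} (e : A ≃g B)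
    (h : A.IsTree) : B.IsTree := by
  refine ⟨h.isConnected.map e.toHom e.toEquiv.surjective, ?_⟩
  intro v p hp
  exact h.IsAcyclic (p.map e.symm.toHom) (hp.map e.symm.toEquiv.injective)

/-- the iso between (G.induce A).induce B and G.induce (val '' B). -/
noncomputable def induceInduceIso (G : SimpleGraph V) (A : Set V) (B : Set ↥A) :
    ((G.induce A).induce B) ≃g (G.induce (Subtype.val '' B)) where
  toFun x := ⟨x.val.val, ⟨x.val, x.2, rfl⟩⟩
  invFun y := ⟨⟨y.val, by obtain ⟨a, ha, he⟩ := y.2; exact he ▸ a.2⟩, by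
    obtain ⟨a, ha, he⟩ := y.2
    have : (⟨y.val, by exact he ▸ a.2⟩ : ↥A) = a := Subtype.ext he.symm
    rw [this]; exact ha⟩
  left_inv x := by ext; rfl
  right_inv y := by ext; rfl
  map_rel_iff' := Iff.rfl

lemma connected_induce_image {A : Set V} {B : Set ↥A}
    (h : ((G.induce A).induce B).Connected) :
    (G.induce (Subtype.val '' B)).Connected :=
  h.map (induceInduceIso G A B).toHom (induceInduceIso G A B).toEquiv.surjective

lemma isTree_induce_image {A : Set V} {B : Set ↥A}
    (h : ((G.induce A).induce B).IsTree) :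
    (G.induce (Subtype.val '' B)).IsTree :=
  isTree_of_iso (induceInduceIso G A B) h

variable {V : Type} {G : SimpleGraph V}

lemma isTree_induce_singleton (v : V) : (G.induce {v}).IsTree := by
  refine ⟨?_, ?_⟩
  · rw [connected_iff]
    refine ⟨fun a b => ?_, ⟨⟨v, rfl⟩⟩⟩
    have : a = b := Subtype.ext (a.2.trans b.2.symm)
    rw [this]
  · intro w p hp
    cases p with
    | nil => exact hp.ne_nil rfl
    | @cons _ b _ h q => exact h.ne (Subtype.ext (w.2.trans (Set.mem_singleton_iff.mp b.2).symm))

lemma tcn_le_of_cover {C : Finset (Set V)} (h : IsTreeCover G C) :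
    treeCoverNumber G ≤ C.card := Nat.sInf_le ⟨C, h, rfl⟩

lemma exists_treeCover (G : SimpleGraph V) [Finite V] :
    ∃ C : Finset (Set V), IsTreeCover G C ∧ C.card ≤ Nat.card V := by
  classical
  have := Fintype.ofFinite V
  refine ⟨(Finset.univ : Finset V).image fun v => ({v} : Set V), ⟨?_, ?_, ?_⟩, ?_⟩
  · intro s hs
    simp only [Finset.mem_image] at hs
    obtain ⟨v, _, rfl⟩ := hs
    exact isTree_induce_singleton v
  · intro v
    exact ⟨{v}, by simp, rfl⟩
  · intro a ha b hb hab
    simp only [Finset.coe_image, Set.mem_image] at ha hb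
    obtain ⟨x, _, rfl⟩ := ha
    obtain ⟨y, _, rfl⟩ := hb
    exact Set.disjoint_singleton.mpr (fun h => hab (by rw [h]))
  · calc ((Finset.univ : Finset V).image fun v => ({v} : Set V)).card
        ≤ (Finset.univ : Finset V).card := Finset.card_image_le
      _ = Nat.card V := by rw [Finset.card_univ, Nat.card_eq_fintype_card]

lemma tcn_mem (G : SimpleGraph V) [Finite V] :
    ∃ C : Finset (Set V), IsTreeCover G C ∧ C.card = treeCoverNumber G := by
  obtain ⟨C, hC, -⟩ := exists_treeCover G
  have : treeCoverNumber G ∈ {n | ∃ C : Finset (Set V), IsTreeCover G C ∧ C.card = n} :=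
    Nat.sInf_mem ⟨C.card, C, hC, rfl⟩
  exact this

lemma tcn_empty {W : Type} [IsEmpty W] (H : SimpleGraph W) : treeCoverNumber H = 0 := by
  have : (0:ℕ) ∈ {n | ∃ C : Finset (Set W), IsTreeCover H C ∧ C.card = n} := by
    refine ⟨∅, ⟨?_, ?_, ?_⟩, rfl⟩
    · intro s hs; simp at hs
    · intro v; exact isEmptyElim v
    · intro a ha; simp at ha
  exact Nat.eq_zero_of_le_zero (Nat.sInf_le this)

lemma glue [Finite V] {S : Set V} (hS : (G.induce S).IsTree) :
    treeCoverNumber G ≤ treeCoverNumber (G.induce Sᶜ) + 1 := by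
  classical
  obtain ⟨C', hC', hcard⟩ := tcn_mem (G.induce Sᶜ)
  have hcover : IsTreeCover G (insert S (C'.image fun t => Subtype.val '' t)) := by
    refine ⟨?_, ?_, ?_⟩
    · intro s hs
      rcases Finset.mem_insert.mp hs with rfl | hs
      · exact hS
      · obtain ⟨t, ht, rfl⟩ := Finset.mem_image.mp hs
        exact isTree_induce_image (hC'.1 t ht)
    · intro v
      by_cases hv : v ∈ S
      · exact ⟨S, Finset.mem_insert_self _ _, hv⟩
      · obtain ⟨t, ht, hvt⟩ := hC'.2.1 ⟨v, hv⟩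
        exact ⟨Subtype.val '' t, Finset.mem_insert_of_mem (Finset.mem_image_of_mem _ ht),
          ⟨⟨v, hv⟩, hvt, rfl⟩⟩
    · have himg : ∀ x ∈ (insert S (C'.image fun t => Subtype.val '' t) : Finset (Set V)),
          x = S ∨ ∃ t ∈ C', x = Subtype.val '' t := by
        intro x hx
        rcases Finset.mem_insert.mp hx with rfl | hx
        · exact Or.inl rfl
        · obtain ⟨t, ht, rfl⟩ := Finset.mem_image.mp hx
          exact Or.inr ⟨t, ht, rfl⟩
      have hdSI : ∀ t : Set ↥(Sᶜ), Disjoint S (Subtype.val '' t) := by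
        intro t
        rw [Set.disjoint_left]
        rintro x hxS ⟨a, _, rfl⟩
        exact a.2 hxS
      intro a ha b hb hab
      rcases himg a ha with rfl | ⟨t₁, ht₁, rfl⟩
      · rcases himg b hb with rfl | ⟨t₂, ht₂, rfl⟩
        · exact absurd rfl hab
        · exact hdSI t₂
      · rcases himg b hb with rfl | ⟨t₂, ht₂, rfl⟩
        · exact (hdSI t₁).symm
        · refine Set.disjoint_image_of_injective Subtype.val_injective ?_
          exact hC'.2.2 ht₁ ht₂ (fun h => hab (by rw [h]))
  refine le_trans (tcn_le_of_cover hcover) ?_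
  calc (insert S (C'.image fun t => Subtype.val '' t)).card
      ≤ (C'.image fun t => Subtype.val '' t).card + 1 := Finset.card_insert_le _ _
    _ ≤ C'.card + 1 := by gcongr; exact Finset.card_image_le
    _ = treeCoverNumber (G.induce Sᶜ) + 1 := by rw [hcard]


variable {V : Type} {G : SimpleGraph V}

/-- A rooted spanning structure. -/
structure SpanStr (G : SimpleGraph V) (r : V) (par : V → V) (d : V → ℕ) : Prop where
  d_root : d r = 0
  par_root : par r = r
  adj : ∀ v, v ≠ r → G.Adj v (par v)
  d_par : ∀ v, v ≠ r → d v = d (par v) + 1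

namespace SpanStr

variable {r : V} {par : V → V} {d : V → ℕ}

lemma d_eq_zero (h : SpanStr G r par d) {v : V} (hv : d v = 0) : v = r := by
  by_contra hne
  have := h.d_par v hne
  omega

lemma d_par_le (h : SpanStr G r par d) (v : V) : d (par v) ≤ d v := by
  by_cases hv : v = r
  · subst hv; rw [h.par_root]
  · have := h.d_par v hv; omega

lemma d_iter_le (h : SpanStr G r par d) (k : ℕ) (v : V) : d (par^[k] v) ≤ d v := by
  induction k with
  | zero => simp
  | succ n ih =>
    rw [Function.iterate_succ_apply']
    exact le_trans (h.d_par_le _) ih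

lemma iter_root (h : SpanStr G r par d) (k : ℕ) : par^[k] r = r :=
  Function.iterate_fixed h.par_root k

lemma reach_root (h : SpanStr G r par d) (v : V) : ∃ k, par^[k] v = r := by
  generalize hn : d v = n
  induction n using Nat.strong_induction_on generalizing v with
  | _ n ih =>
    by_cases hv : v = r
    · exact ⟨0, hv⟩
    · have hd := h.d_par v hv
      obtain ⟨k, hk⟩ := ih (d (par v)) (by omega) (par v) rfl
      exact ⟨k + 1, by rw [Function.iterate_succ_apply]; exact hk⟩

/-- ancestor relation -/
def Anc (par : V → V) (a b : V) : Prop := ∃ k, par^[k] b = a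

lemma anc_d_le (h : SpanStr G r par d) {a b : V} (ha : Anc par a b) : d a ≤ d b := by
  obtain ⟨k, hk⟩ := ha
  rw [← hk]; exact h.d_iter_le k b

lemma anc_d_lt (h : SpanStr G r par d) {a b : V} (ha : Anc par a b) (hne : a ≠ b) :
    d a < d b := by
  obtain ⟨k, hk⟩ := ha
  cases k with
  | zero => exact absurd hk.symm hne
  | succ n =>
    have hbr : b ≠ r := by
      intro hb; subst hb
      exact hne (hk.symm.trans (h.iter_root _))
    have h1 : d a ≤ d (par b) := by
      rw [← hk, Function.iterate_succ_apply]
      exact h.d_iter_le n (par b)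
    have := h.d_par b hbr
    omega

lemma anc_par (h : SpanStr G r par d) {a b : V} (ha : Anc par a b) (hne : b ≠ a) :
    Anc par a (par b) := by
  obtain ⟨k, hk⟩ := ha
  cases k with
  | zero => exact absurd hk hne
  | succ n => exact ⟨n, by rw [← Function.iterate_succ_apply]; exact hk⟩

lemma anc_of_par (h : SpanStr G r par d) {a b : V} (ha : Anc par a (par b)) : Anc par a b := by
  obtain ⟨k, hk⟩ := ha
  exact ⟨k + 1, by rw [Function.iterate_succ_apply]; exact hk⟩

end SpanStr

/-- existence of a spanning structure -/
lemma spanStr_exists (hG : G.Connected) (r : V) : ∃ par d, SpanStr G r par d := by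
  classical
  have key : ∀ v : V, v ≠ r → ∃ u, G.Adj v u ∧ G.dist r u + 1 = G.dist r v := by
    intro v hv
    obtain ⟨w, hw⟩ := (hG v r).exists_walk_length_eq_dist
    cases w with
    | nil => exact absurd rfl hv
    | @cons _ u _ ha q =>
      refine ⟨u, ha, ?_⟩
      have h1 : G.dist r u ≤ q.length := by
        have := SimpleGraph.dist_le q.reverse
        rwa [Walk.length_reverse] at this
      have h2 : G.dist r v ≤ G.dist r u + 1 := by
        have htri := hG.dist_triangle (u := r) (v := u) (w := v)
        have : G.dist u v ≤ 1 := by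
          have := SimpleGraph.dist_le (Walk.cons ha.symm Walk.nil : G.Walk u v)
          simpa using this
        omega
      have h3 : q.length + 1 = G.dist v r := by simpa using hw
      rw [SimpleGraph.dist_comm] at h3
      omega
  choose f hf using key
  refine ⟨fun v => if hv : v = r then r else f v hv, G.dist r, ?_⟩
  constructor
  · exact SimpleGraph.dist_self
  · simp
  · intro v hv; simp only [dif_neg hv]; exact (hf v hv).1
  · intro v hv; simp only [dif_neg hv]; exact ((hf v hv).2).symm ▸ rfl

section Max
variable [Fintype V] {r : V} {par : V → V} {d : V → ℕ}

lemma spanStr_d_bound (h : SpanStr G r par d) (v : V) : d v + 1 ≤ Fintype.card V := by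
  have hinj : Function.Injective (fun i : Fin (d v + 1) => par^[i.val] v) := by
    intro i j hij
    have key : ∀ k : ℕ, k ≤ d v → d (par^[k] v) = d v - k := by
      intro k
      induction k with
      | zero => simp
      | succ n ih =>
        intro hn
        have hdn := ih (by omega)
        have hne : par^[n] v ≠ r := by
          intro hr
          have : d (par^[n] v) = 0 := by rw [hr, h.d_root]
          omega
        rw [Function.iterate_succ_apply']
        have := h.d_par (par^[n] v) hne
        omega
    have hi := key i.val (by omega)
    have hj := key j.val (by omega)
    have hij' : par^[i.val] v = par^[j.val] v := hij
    rw [hij'] at hi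
    have : i.val = j.val := by omega
    exact Fin.ext this
  simpa using Fintype.card_le_of_injective _ hinj

/-- There is a spanning structure with maximal total depth. -/
lemma spanStr_exists_max (hG : G.Connected) (r : V) :
    ∃ par d, SpanStr G r par d ∧
      ∀ par' d', SpanStr G r par' d' → ∑ v, d' v ≤ ∑ v, d v := by
  classical
  set A : Set ℕ := {k | ∃ par d, SpanStr G r par d ∧ ∑ v, d v = k} with hA
  have hne : A.Nonempty := by
    obtain ⟨par, d, h⟩ := spanStr_exists hG r
    exact ⟨∑ v, d v, par, d, h, rfl⟩
  have hbdd : BddAbove A := by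
    refine ⟨Fintype.card V * Fintype.card V, ?_⟩
    rintro k ⟨par, d, h, rfl⟩
    calc ∑ v, d v ≤ ∑ _v : V, Fintype.card V :=
          Finset.sum_le_sum fun v _ => by have := spanStr_d_bound h v; omega
      _ = Fintype.card V * Fintype.card V := by
          rw [Finset.sum_const, Finset.card_univ, smul_eq_mul]
  have hmem := Nat.sSup_mem hne hbdd
  obtain ⟨par, d, h, hsum⟩ := hmem
  refine ⟨par, d, h, ?_⟩
  intro par' d' h'
  rw [hsum]
  exact le_csSup hbdd ⟨par', d', h', rfl⟩

open SpanStr in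
/-- From maximality: any edge, with the deeper endpoint `x`, has `y` as ancestor of `x`. -/
lemma spanStr_edge_anc (h : SpanStr G r par d)
    (hmax : ∀ par' d', SpanStr G r par' d' → ∑ v, d' v ≤ ∑ v, d v)
    {x y : V} (hxy : G.Adj x y) (hd : d y ≤ d x) : Anc par y x := by
  classical
  by_contra hnx
  have hyr : y ≠ r := by
    intro hy; subst hy
    obtain ⟨k, hk⟩ := h.reach_root x
    exact hnx ⟨k, hk⟩
  set Δ : ℕ := d x + 1 - d y with hΔ
  set par' : V → V := fun u => if u = y then x else par u with hpar'
  set d' : V → ℕ := fun u => if SpanStr.Anc par y u then d u + Δ else d u with hd'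
  have hsuby : SpanStr.Anc par y y := ⟨0, rfl⟩
  have hsubr : ¬ SpanStr.Anc par y r := by
    rintro ⟨k, hk⟩
    rw [h.iter_root k] at hk
    exact hyr hk.symm
  have h' : SpanStr G r par' d' := by
    constructor
    · show (if SpanStr.Anc par y r then d r + Δ else d r) = 0
      rw [if_neg hsubr, h.d_root]
    · show (if r = y then x else par r) = r
      rw [if_neg (fun hc => hyr hc.symm), h.par_root]
    · intro v hv
      show G.Adj v (if v = y then x else par v)
      by_cases hvy : v = y
      · rw [if_pos hvy, hvy]; exact hxy.symm
      · rw [if_neg hvy]; exact h.adj v hv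
    · intro v hv
      show (if SpanStr.Anc par y v then d v + Δ else d v)
          = (if SpanStr.Anc par y (if v = y then x else par v)
              then d (if v = y then x else par v) + Δ else d (if v = y then x else par v)) + 1
      by_cases hvy : v = y
      · subst hvy
        rw [if_pos rfl, if_pos hsuby, if_neg hnx]
        omega
      · rw [if_neg hvy]
        by_cases hsv : SpanStr.Anc par y v
        · rw [if_pos hsv, if_pos (h.anc_par hsv hvy)]
          have := h.d_par v hv
          omega
        · rw [if_neg hsv, if_neg (fun hc => hsv (h.anc_of_par hc))]
          exact h.d_par v hv
  have hlt : ∑ v, d v < ∑ v, d' v := by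
    refine Finset.sum_lt_sum (fun v _ => ?_) ⟨y, Finset.mem_univ y, ?_⟩
    · show d v ≤ (if SpanStr.Anc par y v then d v + Δ else d v)
      split <;> omega
    · show d y < (if SpanStr.Anc par y y then d y + Δ else d y)
      rw [if_pos hsuby]
      omega
  have := hmax par' d' h'
  omega
end Max


lemma star_lemma [Fintype V] (hG : G.Connected) (h2 : 2 ≤ Fintype.card V) :
    ∃ (c : V) (L : Set V), L.Nonempty ∧ c ∉ L ∧ (∀ x ∈ L, G.Adj c x) ∧
      (∀ x ∈ L, ∀ y ∈ L, x ≠ y → ¬G.Adj x y) ∧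
      ((insert c L)ᶜ = (∅ : Set V) ∨ (G.induce ((insert c L)ᶜ : Set V)).Connected) := by
  classical
  obtain ⟨r⟩ := hG.nonempty
  obtain ⟨par, d, h, hmax⟩ := spanStr_exists_max hG r
  have hPne : ∃ c, ∃ u, u ≠ r ∧ par u = c := by
    obtain ⟨v, hv⟩ := Fintype.exists_ne_of_one_lt_card (by omega) r
    exact ⟨par v, v, hv, rfl⟩
  set P : Finset V := Finset.univ.filter (fun c => ∃ u, u ≠ r ∧ par u = c) with hP
  have hPne' : P.Nonempty := by
    obtain ⟨c, hc⟩ := hPne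
    exact ⟨c, by simp only [hP, Finset.mem_filter, Finset.mem_univ, true_and]; exact hc⟩
  obtain ⟨c, hcP, hcmax⟩ := P.exists_max_image d hPne'
  rw [hP, Finset.mem_filter] at hcP
  obtain ⟨-, u₀, hu₀r, hu₀⟩ := hcP
  set L : Set V := {u | u ≠ r ∧ par u = c} with hL
  have hLd : ∀ u ∈ L, d u = d c + 1 := by
    intro u hu
    have := h.d_par u hu.1
    rwa [hu.2] at this
  have hcmax' : ∀ a, ∀ z, z ≠ r → par z = a → d a ≤ d c := by
    intro a z h1 h2
    exact hcmax a (by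
      simp only [hP, Finset.mem_filter, Finset.mem_univ, true_and]
      exact ⟨z, h1, h2⟩)
  have hcL : c ∉ L := by
    intro hc
    have := hLd c hc
    omega
  have hadj : ∀ x ∈ L, G.Adj c x := fun x hx => ((hx.2 ▸ h.adj x hx.1 : G.Adj x c)).symm
  have hindep : ∀ x ∈ L, ∀ y ∈ L, x ≠ y → ¬G.Adj x y := by
    intro x hx y hy hne hadjxy
    have hdx := hLd x hx
    have hdy := hLd y hy
    rcases le_total (d y) (d x) with hle | hle
    · have hanc := spanStr_edge_anc h hmax hadjxy hle
      have := h.anc_d_lt hanc (Ne.symm hne)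
      omega
    · have hanc := spanStr_edge_anc h hmax hadjxy.symm hle
      have := h.anc_d_lt hanc hne
      omega
  have hleaf : ∀ x ∈ L, ∀ z, z ≠ r → par z ≠ x := by
    intro x hx z hz hpz
    have h1 := hcmax' x z hz hpz
    have h2 := hLd x hx
    omega
  set W : Set V := (insert c L)ᶜ with hWdef
  have hWpar : ∀ w ∈ W, par w ∈ W := by
    intro w hw hmem
    rcases Set.mem_insert_iff.mp hmem with hpc | hpL
    · by_cases hwr : w = r
      · subst hwr
        rw [h.par_root] at hpc
        exact hw (Set.mem_insert_iff.mpr (Or.inl hpc))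
      · exact hw (Set.mem_insert_iff.mpr (Or.inr ⟨hwr, hpc⟩))
    · by_cases hwr : w = r
      · subst hwr
        rw [h.par_root] at hpL
        exact hpL.1 rfl
      · exact hleaf _ hpL w hwr rfl
  have hWiter : ∀ w ∈ W, ∀ k, par^[k] w ∈ W := by
    intro w hw k
    induction k with
    | zero => exact hw
    | succ n ih =>
      rw [Function.iterate_succ_apply']
      exact hWpar _ ih
  by_cases hWe : W = ∅
  · exact ⟨c, L, ⟨u₀, hu₀r, hu₀⟩, hcL, hadj, hindep, Or.inl hWe⟩
  · have hWne : W.Nonempty := Set.nonempty_iff_ne_empty.mpr hWe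
    obtain ⟨w₀, hw₀⟩ := hWne
    have hrW : r ∈ W := by
      obtain ⟨k, hk⟩ := h.reach_root w₀
      exact hk ▸ hWiter w₀ hw₀ k
    refine ⟨c, L, ⟨u₀, hu₀r, hu₀⟩, hcL, hadj, hindep, Or.inr ?_⟩
    rw [connected_iff]
    refine ⟨?_, ⟨⟨r, hrW⟩⟩⟩
    have key : ∀ n, ∀ w, ∀ hw : w ∈ W, d w ≤ n →
        (G.induce W).Reachable ⟨w, hw⟩ ⟨r, hrW⟩ := by
      intro n
      induction n with
      | zero =>
        intro w hw hdw
        have hwr : w = r := h.d_eq_zero (Nat.le_zero.mp hdw)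
        rw [show (⟨w, hw⟩ : ↥W) = ⟨r, hrW⟩ from Subtype.ext hwr]
      | succ n ih =>
        intro w hw hdw
        by_cases hwr : w = r
        · rw [show (⟨w, hw⟩ : ↥W) = ⟨r, hrW⟩ from Subtype.ext hwr]
        · have h1 : (G.induce W).Adj ⟨w, hw⟩ ⟨par w, hWpar w hw⟩ := by
            exact h.adj w hwr
          have h2 := ih (par w) (hWpar w hw) (by have := h.d_par w hwr; omega)
          exact h1.reachable.trans h2
    intro a b
    exact (key (d a.val) a.val a.2 le_rfl).trans (key (d b.val) b.val b.2 le_rfl).symm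


lemma isTree_induce_center {S : Set V} {c : V} (hc : c ∈ S)
    (hadj : ∀ a ∈ S, a = c ∨ G.Adj c a)
    (hedge : ∀ a ∈ S, ∀ b ∈ S, G.Adj a b → a = c ∨ b = c) : (G.induce S).IsTree := by
  refine ⟨connected_induce_double hc hc (Or.inl rfl) (fun a ha => by
    rcases hadj a ha with h | h
    exacts [Or.inl h, Or.inr (Or.inr (Or.inl h))]), ?_⟩
  refine isAcyclic_double (c₁ := (⟨c, hc⟩ : ↥S)) (c₂ := ⟨c, hc⟩)
    (fun hne => absurd rfl hne) ?_
  rintro ⟨a, ha⟩ ⟨b, hb⟩ hab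
  rcases hedge a ha b hb hab with h | h
  · exact Or.inl (Subtype.ext h)
  · exact Or.inr (Or.inl (Subtype.ext h))

lemma isTree_induce_two_centers {S : Set V} {c₁ c₂ : V} (h₁ : c₁ ∈ S) (h₂ : c₂ ∈ S)
    (hcc : G.Adj c₁ c₂)
    (hadj : ∀ a ∈ S, a = c₁ ∨ a = c₂ ∨ G.Adj c₁ a ∨ G.Adj c₂ a)
    (hedge : ∀ a ∈ S, ∀ b ∈ S, G.Adj a b → a = c₁ ∨ b = c₁ ∨ a = c₂ ∨ b = c₂)
    (hcom : ∀ w ∈ S, G.Adj w c₁ → G.Adj w c₂ → False) : (G.induce S).IsTree := by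
  refine ⟨connected_induce_double h₁ h₂ (Or.inr hcc) hadj, ?_⟩
  refine isAcyclic_double (c₁ := (⟨c₁, h₁⟩ : ↥S)) (c₂ := ⟨c₂, h₂⟩)
    (fun _ w hw1 hw2 => hcom w.val w.2 hw1 hw2) ?_
  rintro ⟨a, ha⟩ ⟨b, hb⟩ hab
  rcases hedge a ha b hb hab with h | h | h | h
  exacts [Or.inl (Subtype.ext h), Or.inr (Or.inl (Subtype.ext h)),
    Or.inr (Or.inr (Or.inl (Subtype.ext h))), Or.inr (Or.inr (Or.inr (Subtype.ext h)))]

lemma tcn_le_card (G : SimpleGraph V) [Finite V] : treeCoverNumber G ≤ Nat.card V := by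
  obtain ⟨C, hC, hcard⟩ := exists_treeCover G
  exact le_trans (tcn_le_of_cover hC) hcard

lemma card_set_compl [Fintype V] (S : Set V) :
    S.ncard + Nat.card ↥(Sᶜ) = Fintype.card V := by
  rw [Nat.card_coe_set_eq, Set.ncard_add_ncard_compl, Nat.card_eq_fintype_card]

/-- Upper bound: every connected graph on n vertices has tree cover number ≤ ⌈n/2⌉. -/
lemma tcn_le_half : ∀ n : ℕ, ∀ {V : Type} [Fintype V] (G : SimpleGraph V),
    Fintype.card V = n → G.Connected → treeCoverNumber G ≤ (n + 1) / 2 := by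
  intro n
  induction n using Nat.strong_induction_on with
  | _ n ih =>
    intro V _ G hcard hG
    classical
    have hVne : 0 < n := hcard ▸ Fintype.card_pos_iff.mpr hG.nonempty
    by_cases h2 : n < 2
    · have := tcn_le_card G
      rw [Nat.card_eq_fintype_card, hcard] at this
      omega
    obtain ⟨c, L, ⟨x₀, hx₀⟩, hcL, hadjL, hindep, hcompl⟩ :=
      star_lemma hG (by omega)
    have hStree : (G.induce (insert c L)).IsTree := by
      refine isTree_induce_center (Set.mem_insert c L) ?_ ?_
      · intro a ha
        rcases Set.mem_insert_iff.mp ha with h | h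
        exacts [Or.inl h, Or.inr (hadjL a h)]
      · intro a ha b hb hab
        rcases Set.mem_insert_iff.mp ha with h | h
        · exact Or.inl h
        rcases Set.mem_insert_iff.mp hb with h' | h'
        · exact Or.inr h'
        · exact absurd hab (hindep a h b h' hab.ne)
    have hglue := glue hStree
    have hcardS : 2 ≤ (insert c L : Set V).ncard := by
      have h1 : (insert c L : Set V).ncard = L.ncard + 1 :=
        Set.ncard_insert_of_notMem hcL (Set.toFinite L)
      have h2 : 0 < L.ncard := (Set.ncard_pos (Set.toFinite L)).mpr ⟨x₀, hx₀⟩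
      omega
    rcases hcompl with he | hconn
    · haveI hie : IsEmpty ↥((insert c L)ᶜ : Set V) := Set.isEmpty_coe_sort.mpr he
      have h0 := tcn_empty (G.induce ((insert c L)ᶜ : Set V))
      omega
    · set m := Nat.card ↥((insert c L)ᶜ : Set V) with hm
      have hcc := card_set_compl (insert c L : Set V)
      rw [hcard] at hcc
      have hIH := ih m (by omega) (G.induce ((insert c L)ᶜ : Set V))
        (by rw [← Nat.card_eq_fintype_card]) hconn
      omega


lemma connected_induce_congr {A B : Set V} (h : A = B) (hc : (G.induce A).Connected) :
    (G.induce B).Connected := h ▸ hc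

lemma insert_connected {W : Set V} (hW : (G.induce W).Connected) {v w : V}
    (hw : w ∈ W) (hadj : G.Adj v w) : (G.induce (insert v W)).Connected := by
  rw [connected_iff]
  have hwm : w ∈ insert v W := Set.mem_insert_of_mem _ hw
  refine ⟨?_, ⟨⟨w, hwm⟩⟩⟩
  have key : ∀ a : ↥(insert v W), (G.induce (insert v W)).Reachable a ⟨w, hwm⟩ := by
    rintro ⟨a, ha⟩
    rcases Set.mem_insert_iff.mp ha with rfl | haW
    · exact Adj.reachable (by exact hadj)
    · have hr := hW.preconnected ⟨a, haW⟩ ⟨w, hw⟩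
      have := hr.map (G.induceHomOfLE (Set.subset_insert v W)).toHom
      exact this
  intro a b
  exact (key a).trans (key b).symm

lemma cross_of_walk {W : Type} {H : SimpleGraph W} {A : Set W} :
    ∀ {a b : W}, H.Walk a b → a ∈ A → b ∉ A →
    ∃ x ∈ A, ∃ y, y ∉ A ∧ H.Adj x y := by
  intro a b p
  induction p with
  | nil => intro ha hb; exact absurd ha hb
  | @cons u c w h q ih =>
    intro ha hb
    by_cases hc : c ∈ A
    · exact ih hc hb
    · exact ⟨u, ha, c, hc, h⟩

lemma exists_adj_of_reachable_ne {W : Type} {H : SimpleGraph W} {a b : W}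
    (h : H.Reachable a b) (hne : a ≠ b) : ∃ c, H.Adj a c := by
  obtain ⟨p⟩ := h
  cases p with
  | nil => exact absurd rfl hne
  | cons hadj _ => exact ⟨_, hadj⟩

lemma adj_of_connected_pair {w z : V} (hne : w ≠ z)
    (h : (G.induce ({w, z} : Set V)).Connected) : G.Adj w z := by
  have hr := h.preconnected ⟨w, by simp⟩ ⟨z, by simp⟩
  obtain ⟨c, hc⟩ := exists_adj_of_reachable_ne hr (fun hh => hne (by
    simpa using congrArg Subtype.val hh))
  rcases Set.mem_insert_iff.mp c.2 with hcw | hcz'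
  · exact absurd (Subtype.ext hcw : c = ⟨w, by simp⟩).symm hc.ne
  · have hcz := Set.mem_singleton_iff.mp hcz'
    have : G.Adj w c.val := hc
    rwa [hcz] at this

/-- Endgame: pendant case with the c-attachment confined to {u₀, v₀} is impossible. -/
lemma endgame [Fintype V] {n : ℕ} {c x y u₀ v₀ : V}
    (hcard : Fintype.card V = n) (hT : (n + 1) / 2 ≤ treeCoverNumber G)
    (hadjx : G.Adj c x) (hadjy : G.Adj c y) (hxy : x ≠ y)
    (hpendx : ∀ b, G.Adj x b → b = c) (hpendy : ∀ b, G.Adj y b → b = c)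
    (hu₀R : u₀ ∈ ((insert c ({x, y} : Set V))ᶜ : Set V))
    (hv₀R : v₀ ∈ ((insert c ({x, y} : Set V))ᶜ : Set V))
    (huv : G.Adj u₀ v₀) (hcu₀ : G.Adj c u₀)
    (hrest : (G.induce ((insert c ({x, y} : Set V))ᶜ \ ({u₀, v₀} : Set V))).Connected)
    (hRconn : (G.induce ((insert c ({x, y} : Set V))ᶜ : Set V)).Connected) : False := by
  classical
  set Rs : Set V := (insert c ({x, y} : Set V))ᶜ with hRsdef
  have hmemRs : ∀ v : V, v ∈ Rs ↔ ¬(v = c ∨ v = x ∨ v = y) := by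
    intro v; simp [hRsdef]
  have hxc : x ≠ c := hadjx.ne'
  have hyc : y ≠ c := hadjy.ne'
  have hu₀c : u₀ ≠ c := fun h => ((hmemRs u₀).mp hu₀R) (Or.inl h)
  have hu₀x : u₀ ≠ x := fun h => ((hmemRs u₀).mp hu₀R) (Or.inr (Or.inl h))
  have hu₀y : u₀ ≠ y := fun h => ((hmemRs u₀).mp hu₀R) (Or.inr (Or.inr h))
  have hv₀c : v₀ ≠ c := fun h => ((hmemRs v₀).mp hv₀R) (Or.inl h)
  have hv₀x : v₀ ≠ x := fun h => ((hmemRs v₀).mp hv₀R) (Or.inr (Or.inl h))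
  have hv₀y : v₀ ≠ y := fun h => ((hmemRs v₀).mp hv₀R) (Or.inr (Or.inr h))
  have huvne : u₀ ≠ v₀ := huv.ne
  -- helper to derive the contradiction from a tree S and connectedness of Sᶜ
  have contra : ∀ S : Set V, (G.induce S).IsTree → (G.induce (Sᶜ : Set V)).Connected →
      4 ≤ S.ncard → False := by
    intro S hS hSc hcardS
    have hglue := glue hS
    have hub := tcn_le_half (Nat.card ↥(Sᶜ : Set V)) (G.induce (Sᶜ : Set V))
      (by rw [← Nat.card_eq_fintype_card]) hSc
    have hcc := card_set_compl S
    rw [hcard] at hcc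
    omega
  by_cases hv₀nbr : ∃ w ∈ Rs \ ({u₀, v₀} : Set V), G.Adj v₀ w
  · -- tree {c,x,y,u₀}, rest = insert v₀ (Rs \ {u₀,v₀})
    obtain ⟨w, hwrest, hvw⟩ := hv₀nbr
    refine contra (insert c (insert x (insert y ({u₀} : Set V)))) ?_ ?_ ?_
    · refine isTree_induce_center (Set.mem_insert _ _) ?_ ?_
      · intro a ha
        simp only [Set.mem_insert_iff, Set.mem_singleton_iff] at ha
        rcases ha with rfl | rfl | rfl | rfl
        exacts [Or.inl rfl, Or.inr hadjx, Or.inr hadjy, Or.inr hcu₀]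
      · intro a ha b hb hab
        simp only [Set.mem_insert_iff, Set.mem_singleton_iff] at ha hb
        rcases ha with rfl | rfl | rfl | rfl
        · exact Or.inl rfl
        · exact Or.inr (hpendx b hab)
        · exact Or.inr (hpendy b hab)
        · rcases hb with rfl | rfl | rfl | rfl
          · exact Or.inr rfl
          · exact absurd (hpendx a hab.symm) hu₀c
          · exact absurd (hpendy a hab.symm) hu₀c
          · exact absurd rfl hab.ne
    · refine connected_induce_congr (B := (insert c (insert x (insert y ({u₀} : Set V))))ᶜ)
        ?_ (insert_connected hrest hwrest hvw)
      ext v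
      simp only [Set.mem_insert_iff, Set.mem_singleton_iff, Set.mem_compl_iff,
        Set.mem_diff, hRsdef]
      constructor
      · rintro (rfl | ⟨hvRs, hvn⟩)
        · push_neg
          exact ⟨hv₀c, hv₀x, hv₀y, (fun h => huvne h.symm)⟩
        · push_neg at hvRs ⊢
          exact ⟨hvRs.1, hvRs.2.1, hvRs.2.2, fun h => hvn (Or.inl h)⟩
      · intro hv
        push_neg at hv
        obtain ⟨h1, h2, h3, h4⟩ := hv
        by_cases h5 : v = v₀
        · exact Or.inl h5
        · exact Or.inr ⟨by push_neg; exact ⟨h1, h2, h3⟩, by push_neg; exact ⟨h4, h5⟩⟩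
    · rw [Set.ncard_insert_of_notMem (by simp [hxc.symm, hyc.symm, hu₀c.symm]),
        Set.ncard_insert_of_notMem (by simp [hxy, hu₀x.symm]),
        Set.ncard_insert_of_notMem (by simp [hu₀y.symm]), Set.ncard_singleton]
  · -- v₀ has no neighbour in the rest
    push_neg at hv₀nbr
    have hu₀nbr : ∃ w ∈ Rs \ ({u₀, v₀} : Set V), G.Adj u₀ w := by
      obtain ⟨⟨w₀, hw₀⟩⟩ := hrest.nonempty
      have hreach := hRconn.preconnected ⟨u₀, hu₀R⟩ ⟨w₀, hw₀.1⟩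
      obtain ⟨p⟩ := hreach
      obtain ⟨a, haA, b, hbA, hab⟩ :=
        cross_of_walk (A := {a : ↥Rs | a.val = u₀ ∨ a.val = v₀}) p (Or.inl rfl)
          (by
            intro hmem
            rcases hmem with h | h
            · exact hw₀.2 (Or.inl h)
            · exact hw₀.2 (Or.inr h))
      have hbrest : b.val ∈ Rs \ ({u₀, v₀} : Set V) := by
        refine ⟨b.2, ?_⟩
        intro hb
        rcases hb with hb | hb
        · exact hbA (Or.inl hb)
        · exact hbA (Or.inr hb)
      have hGab : G.Adj a.val b.val := hab
      rcases haA with h | h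
      · exact ⟨b.val, hbrest, by rw [← h]; exact hGab⟩
      · exact absurd (by rw [← h]; exact hGab) (hv₀nbr b.val hbrest)
    by_cases hcv : G.Adj c v₀
    · -- tree {c,x,y,v₀}, rest = insert u₀ (Rs \ {u₀,v₀})
      obtain ⟨w, hwrest, huw⟩ := hu₀nbr
      refine contra (insert c (insert x (insert y ({v₀} : Set V)))) ?_ ?_ ?_
      · refine isTree_induce_center (Set.mem_insert _ _) ?_ ?_
        · intro a ha
          simp only [Set.mem_insert_iff, Set.mem_singleton_iff] at ha
          rcases ha with rfl | rfl | rfl | rfl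
          exacts [Or.inl rfl, Or.inr hadjx, Or.inr hadjy, Or.inr hcv]
        · intro a ha b hb hab
          simp only [Set.mem_insert_iff, Set.mem_singleton_iff] at ha hb
          rcases ha with rfl | rfl | rfl | rfl
          · exact Or.inl rfl
          · exact Or.inr (hpendx b hab)
          · exact Or.inr (hpendy b hab)
          · rcases hb with rfl | rfl | rfl | rfl
            · exact Or.inr rfl
            · exact absurd (hpendx a hab.symm) hv₀c
            · exact absurd (hpendy a hab.symm) hv₀c
            · exact absurd rfl hab.ne
      · refine connected_induce_congr (B := (insert c (insert x (insert y ({v₀} : Set V))))ᶜ)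
          ?_ (insert_connected hrest hwrest huw)
        ext v
        simp only [Set.mem_insert_iff, Set.mem_singleton_iff, Set.mem_compl_iff,
          Set.mem_diff, hRsdef]
        constructor
        · rintro (rfl | ⟨hvRs, hvn⟩)
          · push_neg
            exact ⟨hu₀c, hu₀x, hu₀y, huvne⟩
          · push_neg at hvRs ⊢
            exact ⟨hvRs.1, hvRs.2.1, hvRs.2.2, fun h => hvn (Or.inr h)⟩
        · intro hv
          push_neg at hv
          obtain ⟨h1, h2, h3, h4⟩ := hv
          by_cases h5 : v = u₀
          · exact Or.inl h5
          · exact Or.inr ⟨by push_neg; exact ⟨h1, h2, h3⟩, by push_neg; exact ⟨h5, h4⟩⟩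
      · rw [Set.ncard_insert_of_notMem (by simp [hxc.symm, hyc.symm, hv₀c.symm]),
          Set.ncard_insert_of_notMem (by simp [hxy, hv₀x.symm]),
          Set.ncard_insert_of_notMem (by simp [hv₀y.symm]), Set.ncard_singleton]
    · -- tree {c,x,y,u₀,v₀} with centres c and u₀, rest = Rs \ {u₀,v₀}
      refine contra (insert c (insert x (insert y (insert u₀ ({v₀} : Set V))))) ?_ ?_ ?_
      · refine isTree_induce_two_centers (c₁ := c) (c₂ := u₀) (Set.mem_insert _ _)
          (by simp) hcu₀ ?_ ?_ ?_
        · intro a ha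
          simp only [Set.mem_insert_iff, Set.mem_singleton_iff] at ha
          rcases ha with rfl | rfl | rfl | rfl | rfl
          exacts [Or.inl rfl, Or.inr (Or.inr (Or.inl hadjx)),
            Or.inr (Or.inr (Or.inl hadjy)), Or.inr (Or.inl rfl),
            Or.inr (Or.inr (Or.inr huv))]
        · intro a ha b hb hab
          simp only [Set.mem_insert_iff, Set.mem_singleton_iff] at ha hb
          rcases ha with rfl | rfl | rfl | rfl | rfl
          · exact Or.inl rfl
          · exact Or.inr (Or.inl (hpendx b hab))
          · exact Or.inr (Or.inl (hpendy b hab))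
          · exact Or.inr (Or.inr (Or.inl rfl))
          · rcases hb with rfl | rfl | rfl | rfl | rfl
            · exact Or.inr (Or.inl rfl)
            · exact absurd (hpendx a hab.symm) hv₀c
            · exact absurd (hpendy a hab.symm) hv₀c
            · exact Or.inr (Or.inr (Or.inr rfl))
            · exact absurd rfl hab.ne
        · intro w hw hw1 hw2
          simp only [Set.mem_insert_iff, Set.mem_singleton_iff] at hw
          rcases hw with rfl | rfl | rfl | rfl | rfl
          · exact hw1.ne rfl
          · exact hu₀c (hpendx u₀ hw2)
          · exact hu₀c (hpendy u₀ hw2)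
          · exact hw2.ne rfl
          · exact hcv hw1.symm
      · refine connected_induce_congr
          (B := (insert c (insert x (insert y (insert u₀ ({v₀} : Set V)))))ᶜ) ?_ hrest
        ext v
        simp only [Set.mem_insert_iff, Set.mem_singleton_iff, Set.mem_compl_iff,
          Set.mem_diff, hRsdef]
        tauto
      · rw [Set.ncard_insert_of_notMem
            (by simp [hxc.symm, hyc.symm, hu₀c.symm, hv₀c.symm]),
          Set.ncard_insert_of_notMem (by simp [hxy, hu₀x.symm, hv₀x.symm]),
          Set.ncard_insert_of_notMem (by simp [hu₀y.symm, hv₀y.symm]),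
          Set.ncard_insert_of_notMem (by simp [huvne]), Set.ncard_singleton]
        omega

lemma main_exists : ∀ n : ℕ, ∀ {V : Type} [Fintype V] (G : SimpleGraph V),
    Fintype.card V = n → G.Connected → 3 ≤ n → (n + 1) / 2 ≤ treeCoverNumber G →
    ∃ u v : V, G.Adj u v ∧ (G.induce ({u, v}ᶜ : Set V)).Connected := by
  intro n
  induction n using Nat.strong_induction_on with
  | _ n ih =>
  intro V _ G hcard hG h3 hT
  classical
  obtain ⟨c, L, hLne, hcL, hadjL, hindep, hcompl⟩ := star_lemma hG (by omega)
  have hStree : (G.induce (insert c L)).IsTree := by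
    refine isTree_induce_center (Set.mem_insert c L) ?_ ?_
    · intro a ha
      rcases Set.mem_insert_iff.mp ha with h | h
      exacts [Or.inl h, Or.inr (hadjL a h)]
    · intro a ha b hb hab
      rcases Set.mem_insert_iff.mp ha with h | h
      · exact Or.inl h
      rcases Set.mem_insert_iff.mp hb with h' | h'
      · exact Or.inr h'
      · exact absurd hab (hindep a h b h' hab.ne)
  have hglueS := glue hStree
  rcases hcompl with he | hconn
  · exfalso
    haveI := Set.isEmpty_coe_sort.mpr he
    have h0 := tcn_empty (G.induce ((insert c L)ᶜ : Set V))
    omega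
  have hcompl_card := card_set_compl (insert c L)
  rw [hcard, Nat.card_coe_set_eq] at hcompl_card
  rcases eq_or_ne L.ncard 1 with h1 | h1
  · obtain ⟨x₀, hx₀⟩ := Set.ncard_eq_one.mp h1
    subst hx₀
    exact ⟨c, x₀, hadjL x₀ rfl, hconn⟩
  by_cases hp3 : 3 ≤ L.ncard
  · exfalso
    have hub := tcn_le_half (Nat.card ↥((insert c L)ᶜ : Set V)) (G.induce _)
      (by rw [← Nat.card_eq_fintype_card]) hconn
    rw [Nat.card_coe_set_eq] at hub
    have hcLcard : (insert c L).ncard = L.ncard + 1 :=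
      Set.ncard_insert_of_notMem hcL (Set.toFinite L)
    omega
  have h2 : L.ncard = 2 := by
    have hpos := (Set.ncard_pos (Set.toFinite L)).mpr hLne
    omega
  obtain ⟨x, y, hxy, hLxy⟩ := Set.ncard_eq_two.mp h2
  subst hLxy
  have hadjx : G.Adj c x := hadjL x (Or.inl rfl)
  have hadjy : G.Adj c y := hadjL y (Or.inr rfl)
  have hnxy : ¬G.Adj x y := hindep x (Or.inl rfl) y (Or.inr rfl) hxy
  have hxc : x ≠ c := hadjx.ne'
  have hyc : y ≠ c := hadjy.ne'
  have hmemRs : ∀ v : V, v ∈ ((insert c ({x, y} : Set V))ᶜ : Set V) ↔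
      ¬(v = c ∨ v = x ∨ v = y) := by
    intro v; simp
  by_cases hxnbr : ∃ w ∈ ((insert c ({x, y} : Set V))ᶜ : Set V), G.Adj x w
  · obtain ⟨w, hwR, hxw⟩ := hxnbr
    refine ⟨c, y, hadjy, ?_⟩
    refine connected_induce_congr ?_ (insert_connected hconn hwR hxw)
    ext v
    simp only [Set.mem_insert_iff, Set.mem_compl_iff, Set.mem_singleton_iff]
    constructor
    · rintro (rfl | hv)
      · push_neg; exact ⟨hxc, hxy⟩
      · push_neg at hv ⊢; exact ⟨hv.1, hv.2.2⟩
    · intro hv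
      push_neg at hv
      by_cases h5 : v = x
      · exact Or.inl h5
      · right; push_neg; exact ⟨hv.1, h5, hv.2⟩
  by_cases hynbr : ∃ w ∈ ((insert c ({x, y} : Set V))ᶜ : Set V), G.Adj y w
  · obtain ⟨w, hwR, hyw⟩ := hynbr
    refine ⟨c, x, hadjx, ?_⟩
    refine connected_induce_congr ?_ (insert_connected hconn hwR hyw)
    ext v
    simp only [Set.mem_insert_iff, Set.mem_compl_iff, Set.mem_singleton_iff]
    constructor
    · rintro (rfl | hv)
      · push_neg; exact ⟨hyc, fun h => hxy h.symm⟩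
      · push_neg at hv ⊢; exact ⟨hv.1, hv.2.1⟩
    · intro hv
      push_neg at hv
      by_cases h5 : v = y
      · exact Or.inl h5
      · right; push_neg; exact ⟨hv.1, hv.2, h5⟩
  push_neg at hxnbr hynbr
  have hpendx : ∀ b, G.Adj x b → b = c := by
    intro b hb
    by_cases hbR : b ∈ ((insert c ({x, y} : Set V))ᶜ : Set V)
    · exact absurd hb (hxnbr b hbR)
    · have hbm : b = c ∨ b = x ∨ b = y := by
        by_contra hcon
        exact hbR ((hmemRs b).mpr hcon)
      rcases hbm with rfl | rfl | rfl
      · rfl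
      · exact absurd rfl hb.ne
      · exact absurd hb hnxy
  have hpendy : ∀ b, G.Adj y b → b = c := by
    intro b hb
    by_cases hbR : b ∈ ((insert c ({x, y} : Set V))ᶜ : Set V)
    · exact absurd hb (hynbr b hbR)
    · have hbm : b = c ∨ b = x ∨ b = y := by
        by_contra hcon
        exact hbR ((hmemRs b).mpr hcon)
      rcases hbm with rfl | rfl | rfl
      · rfl
      · exact absurd hb.symm hnxy
      · exact absurd rfl hb.ne
  have hcR : ∃ w ∈ ((insert c ({x, y} : Set V))ᶜ : Set V), G.Adj c w := by
    obtain ⟨⟨w₀, hw₀⟩⟩ := hconn.nonempty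
    obtain ⟨p⟩ := hG.preconnected c w₀
    obtain ⟨a, haA, b, hbA, hab⟩ :=
      cross_of_walk (A := insert c ({x, y} : Set V)) p (Set.mem_insert c _) hw₀
    rcases Set.mem_insert_iff.mp haA with rfl | ha'
    · exact ⟨b, hbA, hab⟩
    rcases Set.mem_insert_iff.mp ha' with rfl | ha''
    · exact absurd (by rw [hpendx b hab]; exact Set.mem_insert c _) hbA
    · rw [Set.mem_singleton_iff.mp ha''] at hab
      exact absurd (by rw [hpendy b hab]; exact Set.mem_insert c _) hbA
  have hScard : (insert c ({x, y} : Set V)).ncard = 3 := by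
    rw [Set.ncard_insert_of_notMem (by simp [hxc.symm, hyc.symm]), Set.ncard_pair hxy]
  have hmn : ((insert c ({x, y} : Set V))ᶜ : Set V).ncard + 3 = n := by omega
  have hm1 : 1 ≤ ((insert c ({x, y} : Set V))ᶜ : Set V).ncard := by
    have := (Set.ncard_pos (Set.toFinite _)).mpr
      (Set.nonempty_coe_sort.mp hconn.nonempty)
    omega
  rcases eq_or_ne ((insert c ({x, y} : Set V))ᶜ : Set V).ncard 1 with hm1' | hm1'
  · exfalso
    obtain ⟨w, hw⟩ := Set.ncard_eq_one.mp hm1'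
    obtain ⟨w', hw', hcw'⟩ := hcR
    rw [hw, Set.mem_singleton_iff] at hw'
    subst hw'
    have hwne : ¬(w' = c ∨ w' = x ∨ w' = y) := by
      apply (hmemRs w').mp
      rw [hw]; rfl
    have htree : (G.induce (Set.univ : Set V)).IsTree := by
      refine isTree_induce_center (c := c) (Set.mem_univ c) ?_ ?_
      · intro a _
        by_cases haR : a ∈ ((insert c ({x, y} : Set V))ᶜ : Set V)
        · rw [hw, Set.mem_singleton_iff] at haR
          rw [haR]; exact Or.inr hcw'
        · have ham : a = c ∨ a = x ∨ a = y := by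
            by_contra hcon
            exact haR ((hmemRs a).mpr hcon)
          rcases ham with rfl | rfl | rfl
          exacts [Or.inl rfl, Or.inr hadjx, Or.inr hadjy]
      · intro a _ b _ hab
        by_cases haR : a ∈ ((insert c ({x, y} : Set V))ᶜ : Set V)
        · rw [hw, Set.mem_singleton_iff] at haR
          subst haR
          by_cases hbR : b ∈ ((insert c ({x, y} : Set V))ᶜ : Set V)
          · rw [hw, Set.mem_singleton_iff] at hbR
            subst hbR
            exact absurd rfl hab.ne
          · have hbm : b = c ∨ b = x ∨ b = y := by
              by_contra hcon
              exact hbR ((hmemRs b).mpr hcon)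
            rcases hbm with rfl | rfl | rfl
            · exact Or.inr rfl
            · exact absurd (hpendx a hab.symm) (fun h => hwne (Or.inl h))
            · exact absurd (hpendy a hab.symm) (fun h => hwne (Or.inl h))
        · have ham : a = c ∨ a = x ∨ a = y := by
            by_contra hcon
            exact haR ((hmemRs a).mpr hcon)
          rcases ham with rfl | rfl | rfl
          · exact Or.inl rfl
          · exact Or.inr (hpendx b hab)
          · exact Or.inr (hpendy b hab)
    have hg2 := glue (G := G) (S := Set.univ) htree
    haveI : IsEmpty ↥((Set.univ : Set V)ᶜ) := Set.isEmpty_coe_sort.mpr (by simp)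
    have h0 := tcn_empty (G.induce ((Set.univ : Set V)ᶜ))
    omega
  rcases eq_or_ne ((insert c ({x, y} : Set V))ᶜ : Set V).ncard 2 with hm2 | hm2
  · obtain ⟨w, z, hwz, hRwz⟩ := Set.ncard_eq_two.mp hm2
    have hadjwz : G.Adj w z := adj_of_connected_pair hwz (connected_induce_congr hRwz hconn)
    refine ⟨w, z, hadjwz, ?_⟩
    refine connected_induce_congr (A := insert x (insert y ({c} : Set V))) ?_ ?_
    · ext v
      have hv := hmemRs v
      rw [hRwz] at hv
      simp only [Set.mem_insert_iff, Set.mem_singleton_iff, Set.mem_compl_iff] at hv ⊢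
      tauto
    · refine connected_induce_double (c₁ := c) (c₂ := c) (by simp) (by simp) (Or.inl rfl) ?_
      intro a ha
      simp only [Set.mem_insert_iff, Set.mem_singleton_iff] at ha
      rcases ha with rfl | rfl | rfl
      exacts [Or.inr (Or.inr (Or.inl hadjx)), Or.inr (Or.inr (Or.inl hadjy)), Or.inl rfl]
  have hm3 : 3 ≤ ((insert c ({x, y} : Set V))ᶜ : Set V).ncard := by omega
  have hTR : (((insert c ({x, y} : Set V))ᶜ : Set V).ncard + 1) / 2 ≤
      treeCoverNumber (G.induce ((insert c ({x, y} : Set V))ᶜ : Set V)) := by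
    by_contra hlt
    push_neg at hlt
    omega
  obtain ⟨u', v', huv', hconn'⟩ := ih ((insert c ({x, y} : Set V))ᶜ : Set V).ncard
    (by omega) (G.induce ((insert c ({x, y} : Set V))ᶜ : Set V))
    (by rw [← Nat.card_eq_fintype_card, Nat.card_coe_set_eq]) hconn hm3 hTR
  have hGuv : G.Adj u'.val v'.val := huv'
  have himg : Subtype.val '' (({u', v'} : Set ↥((insert c ({x, y} : Set V))ᶜ : Set V))ᶜ) =
      ((insert c ({x, y} : Set V))ᶜ : Set V) \ ({u'.val, v'.val} : Set V) := by
    ext v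
    simp only [Set.mem_image, Set.mem_compl_iff, Set.mem_insert_iff,
      Set.mem_singleton_iff, Set.mem_diff]
    constructor
    · rintro ⟨a, ha, rfl⟩
      refine ⟨a.2, ?_⟩
      rintro (h | h)
      · exact ha (Or.inl (Subtype.ext h))
      · exact ha (Or.inr (Subtype.ext h))
    · rintro ⟨hvR, hvn⟩
      refine ⟨⟨v, hvR⟩, ?_, rfl⟩
      rintro (h | h)
      · exact hvn (Or.inl (congrArg Subtype.val h))
      · exact hvn (Or.inr (congrArg Subtype.val h))
  have hrest : (G.induce (((insert c ({x, y} : Set V))ᶜ : Set V) \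
      ({u'.val, v'.val} : Set V))).Connected :=
    connected_induce_congr himg (connected_induce_image hconn')
  by_cases hcw : ∃ w ∈ ((insert c ({x, y} : Set V))ᶜ : Set V) \
      ({u'.val, v'.val} : Set V), G.Adj c w
  · obtain ⟨w, hwrest, hcwadj⟩ := hcw
    refine ⟨u'.val, v'.val, hGuv, ?_⟩
    have hc1 := insert_connected hrest hwrest hcwadj
    have hc2 := insert_connected hc1 (Set.mem_insert c _) hadjx.symm
    have hc3 := insert_connected hc2 (Set.mem_insert_of_mem _ (Set.mem_insert c _)) hadjy.symm
    refine connected_induce_congr ?_ hc3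
    ext v
    have hu'm := (hmemRs u'.val).mp u'.2
    have hv'm := (hmemRs v'.val).mp v'.2
    simp only [Set.mem_insert_iff, Set.mem_compl_iff, Set.mem_singleton_iff,
      Set.mem_diff] at hu'm hv'm ⊢
    constructor
    · rintro (rfl | rfl | rfl | ⟨-, hvn⟩)
      · rintro (h | h)
        · exact hu'm (Or.inr (Or.inr h.symm))
        · exact hv'm (Or.inr (Or.inr h.symm))
      · rintro (h | h)
        · exact hu'm (Or.inr (Or.inl h.symm))
        · exact hv'm (Or.inr (Or.inl h.symm))
      · rintro (h | h)
        · exact hu'm (Or.inl h.symm)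
        · exact hv'm (Or.inl h.symm)
      · exact hvn
    · intro hv2
      by_cases h5 : v = y
      · exact Or.inl h5
      by_cases h6 : v = x
      · exact Or.inr (Or.inl h6)
      by_cases h7 : v = c
      · exact Or.inr (Or.inr (Or.inl h7))
      · refine Or.inr (Or.inr (Or.inr ⟨?_, hv2⟩))
        rintro (h | h | h)
        exacts [h7 h, h6 h, h5 h]
  · push_neg at hcw
    exfalso
    obtain ⟨w₁, hw₁R, hcw₁⟩ := hcR
    have hw₁uv : w₁ = u'.val ∨ w₁ = v'.val := by
      by_contra hne
      push_neg at hne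
      refine hcw w₁ ⟨hw₁R, ?_⟩ hcw₁
      rintro (h | h)
      · exact hne.1 h
      · exact hne.2 h
    rcases hw₁uv with rfl | rfl
    · exact endgame hcard hT hadjx hadjy hxy hpendx hpendy u'.2 v'.2 hGuv hcw₁ hrest hconn
    · have hrest' : (G.induce (((insert c ({x, y} : Set V))ᶜ : Set V) \
          ({v'.val, u'.val} : Set V))).Connected :=
        connected_induce_congr (congrArg (fun s => ((insert c ({x, y} : Set V))ᶜ : Set V) \ s) (Set.pair_comm u'.val v'.val)) hrest
      exact endgame hcard hT hadjx hadjy hxy hpendx hpendy v'.2 u'.2 hGuv.symm hcw₁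
        hrest' hconn


theorem stmt_7 {V : Type} [Fintype V] (G : SimpleGraph V) (hG : G.Connected)
    (hn : 3 ≤ Fintype.card V) (hT : treeCoverNumber G = (Fintype.card V + 1) / 2) :
    ∃ u v : V, G.Adj u v ∧ (G.induce ({u, v}ᶜ : Set V)).Connected ∧
      treeCoverNumber (G.induce ({u, v}ᶜ : Set V)) = (Fintype.card V - 2 + 1) / 2 := by
  classical
  have hT' : (Fintype.card V + 1) / 2 ≤ treeCoverNumber G := le_of_eq hT.symm
  obtain ⟨u, v, huv, hconn⟩ := main_exists (Fintype.card V) G rfl hG hn hT'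
  refine ⟨u, v, huv, hconn, ?_⟩
  have hK2 : (G.induce ({u, v} : Set V)).IsTree := by
    refine isTree_induce_center (c := u) (Set.mem_insert u _) ?_ ?_
    · intro a ha
      rcases Set.mem_insert_iff.mp ha with h | h
      · exact Or.inl h
      · rw [Set.mem_singleton_iff.mp h]; exact Or.inr huv
    · intro a ha b hb hab
      rcases Set.mem_insert_iff.mp ha with h | h
      · exact Or.inl h
      rcases Set.mem_insert_iff.mp hb with h' | h'
      · exact Or.inr h'
      · rw [Set.mem_singleton_iff.mp h, Set.mem_singleton_iff.mp h'] at hab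
        exact absurd rfl hab.ne
  have hglue2 := glue hK2
  have hub := tcn_le_half (Nat.card ↥(({u, v} : Set V)ᶜ)) (G.induce (({u, v} : Set V)ᶜ))
    (by rw [← Nat.card_eq_fintype_card]) hconn
  have hcc := card_set_compl ({u, v} : Set V)
  have hpair : ({u, v} : Set V).ncard = 2 := Set.ncard_pair huv.ne
  rw [hT] at hglue2
  omega

end All
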